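/- For every α ∈ (0, 1), ½ · Im ∫_{−π/2}^{π/2} ( 1/(e^{iθ} − α) − 1/(e^{iθ} + α) + 1/(e^{iθ} + 1/α) − 1/(e^{iθ} − 1/α) ) · i·e^{iθ} dθ = 4·arctan(α). -/

import Mathlib

open intervalIntegral

private lemma arg_of_re_pos' {z : ℂ} (h : 0 < z.re) :
    Complex.arg z = Real.arctan (z.im / z.re) := by
  have h1 : -(Real.pi / 2) < Complex.arg z :=
    Complex.neg_pi_div_two_lt_arg_iff.2 (Or.inl h)
  have h2 : Complex.arg z < Real.pi / 2 :=
    Complex.arg_lt_pi_div_two_iff.2 (Or.inl h)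
  have := Real.arctan_tan h1 h2
  rw [Complex.tan_arg] at this
  exact this.symm

/-- The boundary period integral: for `α ∈ (0, 1)`, half the imaginary part of
the integral of `d ln[(z−α)(z+1/α)/((z−1/α)(z+α))]` over the arc
`z = e^{iθ}`, `θ ∈ [−π/2, π/2]`, equals `4·arctan α`. -/
theorem stmt_19 (α : ℝ) (hα : α ∈ Set.Ioo (0 : ℝ) 1) :
    (1 / 2) * (∫ θ in (-(Real.pi / 2))..(Real.pi / 2),
        ((1 / (Complex.exp (θ * Complex.I) - (α : ℂ))
          - 1 / (Complex.exp (θ * Complex.I) + (α : ℂ))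
          + 1 / (Complex.exp (θ * Complex.I) + 1 / (α : ℂ))
          - 1 / (Complex.exp (θ * Complex.I) - 1 / (α : ℂ)))
          * (Complex.I * Complex.exp (θ * Complex.I)))).im
      = 4 * Real.arctan α := by
  obtain ⟨hα0, hα1⟩ := hα
  set a : ℂ := (α : ℂ) with ha
  set b : ℂ := 1 / (α : ℂ) with hb
  have hαinv : (1 : ℝ) < 1 / α := (one_lt_div hα0).2 hα1
  have hbre : b.re = 1 / α := by simp [hb]
  have hbim : b.im = 0 := by simp [hb]
  have hare : a.re = α := by simp [ha]
  have haim : a.im = 0 := by simp [ha]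
  -- the potential / antiderivative
  set g : ℝ → ℂ := fun θ =>
    Complex.log (Complex.exp (θ * Complex.I) - a)
      - Complex.log (Complex.exp (θ * Complex.I) + a)
      + Complex.log (Complex.exp (θ * Complex.I) + b)
      - Complex.log (b - Complex.exp (θ * Complex.I)) with hg
  set F : ℝ → ℂ := fun θ =>
    ((1 / (Complex.exp (θ * Complex.I) - a)
      - 1 / (Complex.exp (θ * Complex.I) + a)
      + 1 / (Complex.exp (θ * Complex.I) + b)
      - 1 / (Complex.exp (θ * Complex.I) - b))
      * (Complex.I * Complex.exp (θ * Complex.I))) with hF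
  -- denominators never vanish
  have habs : ∀ θ : ℝ, ‖Complex.exp (θ * Complex.I)‖ = 1 := fun θ =>
    Complex.norm_exp_ofReal_mul_I θ
  have habsa : ‖a‖ = α := by
    simp [ha, Complex.norm_real, abs_of_pos hα0]
  have habsb : ‖b‖ = 1 / α := by
    simp [hb, Complex.norm_real, abs_of_pos hα0]
  have h1 : ∀ θ : ℝ, Complex.exp (θ * Complex.I) - a ≠ 0 := by
    intro θ h
    have h' := congrArg Norm.norm (sub_eq_zero.mp h)
    rw [habs, habsa] at h'
    linarith
  have h2 : ∀ θ : ℝ, Complex.exp (θ * Complex.I) + a ≠ 0 := by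
    intro θ h
    have h' : Complex.exp (θ * Complex.I) = -a := by linear_combination h
    have h'' := congrArg Norm.norm h'
    rw [habs, norm_neg, habsa] at h''
    linarith
  have h3 : ∀ θ : ℝ, Complex.exp (θ * Complex.I) + b ≠ 0 := by
    intro θ h
    have h' : Complex.exp (θ * Complex.I) = -b := by linear_combination h
    have h'' := congrArg Norm.norm h'
    rw [habs, norm_neg, habsb] at h''
    linarith
  have h4 : ∀ θ : ℝ, Complex.exp (θ * Complex.I) - b ≠ 0 := by
    intro θ h
    have h' := congrArg Norm.norm (sub_eq_zero.mp h)
    rw [habs, habsb] at h'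
    linarith
  have h4' : ∀ θ : ℝ, b - Complex.exp (θ * Complex.I) ≠ 0 := by
    intro θ h
    exact h4 θ (by linear_combination -h)
  -- continuity of the integrand
  have hce : Continuous fun θ : ℝ => Complex.exp (θ * Complex.I) :=
    Complex.continuous_exp.comp (by fun_prop)
  have hcF : Continuous F := by
    rw [hF]
    refine Continuous.mul ?_ (continuous_const.mul hce)
    refine Continuous.sub (Continuous.add (Continuous.sub ?_ ?_) ?_) ?_
    · exact continuous_const.div (hce.sub continuous_const) h1
    · exact continuous_const.div (hce.add continuous_const) h2
    · exact continuous_const.div (hce.add continuous_const) h3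
    · exact continuous_const.div (hce.sub continuous_const) h4
  -- derivative of g is F on the interval
  have hderiv : ∀ θ ∈ Set.uIcc (-(Real.pi / 2)) (Real.pi / 2), HasDerivAt g (F θ) θ := by
    intro θ hθ
    rw [Set.uIcc_of_le (by linarith [Real.pi_pos])] at hθ
    obtain ⟨hθ1, hθ2⟩ := hθ
    have hcos : 0 ≤ Real.cos θ :=
      Real.cos_nonneg_of_mem_Icc ⟨hθ1, hθ2⟩
    have he : HasDerivAt (fun t : ℝ => Complex.exp (t * Complex.I))
        (Complex.exp (θ * Complex.I) * Complex.I) θ := by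
      have hlin : HasDerivAt (fun t : ℝ => (t : ℂ) * Complex.I) Complex.I θ := by
        simpa using (Complex.ofRealCLM.hasDerivAt (x := θ)).mul_const Complex.I
      simpa using hlin.cexp
    have hre : (Complex.exp (θ * Complex.I)).re = Real.cos θ :=
      Complex.exp_ofReal_mul_I_re θ
    have him : (Complex.exp (θ * Complex.I)).im = Real.sin θ :=
      Complex.exp_ofReal_mul_I_im θ
    -- slit plane memberships
    have s1 : Complex.exp (θ * Complex.I) - a ∈ Complex.slitPlane := by
      rw [Complex.mem_slitPlane_iff]
      rcases eq_or_ne (Real.sin θ) 0 with hs | hs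
      · left
        have hθ0 : θ = 0 := by
          have hπ := Real.pi_pos
          exact (Real.sin_eq_zero_iff_of_lt_of_lt (by linarith) (by linarith)).1 hs
        simp [Complex.sub_re, hre, hare, hθ0, Real.cos_zero]
        linarith
      · right
        simp [Complex.sub_im, him, haim, hs]
    have s2 : Complex.exp (θ * Complex.I) + a ∈ Complex.slitPlane := by
      rw [Complex.mem_slitPlane_iff]
      left
      simp only [Complex.add_re, hre, hare]
      linarith
    have s3 : Complex.exp (θ * Complex.I) + b ∈ Complex.slitPlane := by
      rw [Complex.mem_slitPlane_iff]
      left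
      simp only [Complex.add_re, hre, hbre]
      linarith
    have s4 : b - Complex.exp (θ * Complex.I) ∈ Complex.slitPlane := by
      rw [Complex.mem_slitPlane_iff]
      left
      simp only [Complex.sub_re, hre, hbre]
      have := Real.cos_le_one θ
      linarith
    have d1 := ((he.sub_const a).clog_real s1)
    have d2 := ((he.add_const a).clog_real s2)
    have d3 := ((he.add_const b).clog_real s3)
    have d4 := ((he.const_sub b).clog_real s4)
    have hd := ((d1.sub d2).add d3).sub d4
    have key : ∀ x y : ℂ, -x / (b - y) = x / (y - b) := by
      intro x y
      rw [neg_div, show y - b = -(b - y) by ring, div_neg]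
    refine hd.congr_deriv ?_
    symm
    rw [hF, key]
    field_simp
  have hint : IntervalIntegrable F MeasureTheory.volume (-(Real.pi / 2)) (Real.pi / 2) :=
    hcF.intervalIntegrable _ _
  have hFTC := intervalIntegral.integral_eq_sub_of_hasDerivAt hderiv hint
  have hIeq : (∫ θ in (-(Real.pi / 2))..(Real.pi / 2),
      ((1 / (Complex.exp (θ * Complex.I) - (α : ℂ))
        - 1 / (Complex.exp (θ * Complex.I) + (α : ℂ))
        + 1 / (Complex.exp (θ * Complex.I) + 1 / (α : ℂ))
        - 1 / (Complex.exp (θ * Complex.I) - 1 / (α : ℂ)))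
        * (Complex.I * Complex.exp (θ * Complex.I))))
      = g (Real.pi / 2) - g (-(Real.pi / 2)) := hFTC
  rw [hIeq]
  -- endpoint values of exp
  have hexp_pos : Complex.exp ((Real.pi / 2 : ℝ) * Complex.I) = Complex.I := by
    rw [Complex.exp_mul_I]
    simp [← Complex.ofReal_cos, ← Complex.ofReal_sin, Real.cos_pi_div_two,
      Real.sin_pi_div_two]
  have hexp_neg : Complex.exp ((-(Real.pi / 2) : ℝ) * Complex.I) = -Complex.I := by
    rw [Complex.exp_mul_I]
    simp [← Complex.ofReal_cos, ← Complex.ofReal_sin, Real.cos_pi_div_two,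
      Real.sin_pi_div_two]
  -- arg computations
  have hα' : (0 : ℝ) < 1 / α := by positivity
  have argIa : Complex.arg (Complex.I - a) = Real.pi - Real.arctan (1 / α) := by
    have him : (a - Complex.I).im < 0 := by simp [haim]
    have h' : Complex.I - a = -(a - Complex.I) := by ring
    rw [h', Complex.arg_neg_eq_arg_add_pi_of_im_neg him,
      arg_of_re_pos' (by simp [hare]; exact hα0)]
    simp only [Complex.sub_im, Complex.sub_re, haim, hare, Complex.I_im, Complex.I_re]
    rw [show (0 - 1) / (α - 0) = -(1/α) by field_simp; ring, Real.arctan_neg]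
    ring
  have argIa' : Complex.arg (Complex.I + a) = Real.arctan (1 / α) := by
    rw [arg_of_re_pos' (by simp [hare]; exact hα0)]
    simp only [Complex.add_im, Complex.add_re, haim, hare, Complex.I_im, Complex.I_re]
    norm_num
  have argIb : Complex.arg (Complex.I + b) = Real.arctan α := by
    rw [arg_of_re_pos' (by rw [Complex.add_re, hbre]; simp; positivity)]
    rw [Complex.add_im, Complex.add_re, hbim, hbre]
    simp only [Complex.I_im, Complex.I_re]
    rw [show (1 + 0) / (0 + 1 / α) = α by field_simp; ring]
  have argbI : Complex.arg (b - Complex.I) = -Real.arctan α := by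
    rw [arg_of_re_pos' (by rw [Complex.sub_re, hbre]; simp; positivity)]
    rw [Complex.sub_im, Complex.sub_re, hbim, hbre]
    simp only [Complex.I_im, Complex.I_re]
    rw [show (0 - 1) / (1 / α - 0) = -α by field_simp; ring, Real.arctan_neg]
  have argnIa : Complex.arg (-Complex.I - a) = Real.arctan (1 / α) - Real.pi := by
    have him : (Complex.I + a).im > 0 := by simp [haim]
    have h' : -Complex.I - a = -(Complex.I + a) := by ring
    rw [h', Complex.arg_neg_eq_arg_sub_pi_of_im_pos him, argIa']
  have argnIa' : Complex.arg (-Complex.I + a) = -Real.arctan (1 / α) := by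
    rw [arg_of_re_pos' (by simp [hare]; exact hα0)]
    simp only [Complex.add_im, Complex.add_re, haim, hare, Complex.neg_im, Complex.neg_re,
      Complex.I_im, Complex.I_re]
    rw [show (-1 + 0) / (-0 + α) = -(1/α) by field_simp; ring, Real.arctan_neg]
  have argnIb : Complex.arg (-Complex.I + b) = -Real.arctan α := by
    rw [arg_of_re_pos' (by rw [Complex.add_re, hbre]; simp; positivity)]
    rw [Complex.add_im, Complex.add_re, hbim, hbre]
    simp only [Complex.neg_im, Complex.neg_re, Complex.I_im, Complex.I_re]
    rw [show (-1 + 0) / (-0 + 1 / α) = -α by field_simp; ring, Real.arctan_neg]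
  have argbnI : Complex.arg (b - -Complex.I) = Real.arctan α := by
    rw [arg_of_re_pos' (by rw [Complex.sub_re, hbre]; simp; positivity)]
    rw [Complex.sub_im, Complex.sub_re, hbim, hbre]
    simp only [Complex.neg_im, Complex.neg_re, Complex.I_im, Complex.I_re]
    rw [show (0 - -1) / (1 / α - -0) = α by field_simp; ring]
  -- put everything together
  rw [hg]
  simp only [hexp_pos, hexp_neg, Complex.sub_im, Complex.add_im, Complex.log_im]
  rw [argIa, argIa', argIb, argbI, argnIa, argnIa', argnIb, argbnI]
  have harctan : Real.arctan (1 / α) = Real.pi / 2 - Real.arctan α := by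
    rw [one_div]; exact Real.arctan_inv_of_pos hα0
  rw [harctan]
  ring
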